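/- For any density operator $\rho$ and Hermitian operator $A$ on a finite-dimensional Hilbert space, $\|[A,\rho]\|_1 \le \sqrt{\mathcal{F}_\rho(A)}$, where $\mathcal{F}_\rho(A)$ is the SLD quantum Fisher information. -/

import Mathlib

open Matrix
open scoped Kronecker ComplexOrder

variable {n m : Type*} [Fintype n] [DecidableEq n] [Fintype m] [DecidableEq m]

open Classical in
/-- square root of a matrix (zero if not PSD) -/
noncomputable def msqrt (A : Matrix n n ℂ) : Matrix n n ℂ :=
  if h : A.PosSemidef then (h.1.eigenvectorUnitary : Matrix n n ℂ) *
    diagonal ((fun x : ℝ => (x : ℂ)) ∘ (√·) ∘ h.1.eigenvalues) *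
    (star h.1.eigenvectorUnitary : Matrix n n ℂ) else 0

/-- trace norm -/
noncomputable def traceNorm (X : Matrix n m ℂ) : ℝ :=
  ((msqrt (Xᴴ * X)).trace).re

def IsDensity (ρ : Matrix n n ℂ) : Prop := ρ.PosSemidef ∧ ρ.trace = 1

noncomputable def variance (σ A : Matrix n n ℂ) : ℝ :=
  (Matrix.trace (σ * (A * A))).re - ((Matrix.trace (σ * A)).re) ^ 2

/-- `L` is a symmetric logarithmic derivative for `(σ, W)`. -/
def IsSLD (σ W L : Matrix n n ℂ) : Prop :=
  L.IsHermitian ∧ L * σ + σ * L = ((-2 : ℂ) * Complex.I) • (W * σ - σ * W)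

/-- SLD Fisher information value associated with a given SLD `L`. -/
noncomputable def fisherVal (σ L : Matrix n n ℂ) : ℝ :=
  (Matrix.trace (σ * (L * L))).re

noncomputable def fidelity (ρ σ : Matrix n n ℂ) : ℝ :=
  ((msqrt (msqrt ρ * σ * msqrt ρ)).trace).re

noncomputable def purifiedDist (ρ σ : Matrix n n ℂ) : ℝ :=
  Real.sqrt (1 - fidelity ρ σ ^ 2)

/-- completely positive -/
def IsCompletelyPositive (Φ : Matrix n n ℂ →ₗ[ℂ] Matrix m m ℂ) : Prop :=
  ∀ (k : ℕ) (M : Matrix (Fin k × n) (Fin k × n) ℂ), M.PosSemidef →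
    (Matrix.of fun (p q : Fin k × m) => (Φ (Matrix.of fun i j => M (p.1, i) (q.1, j))) p.2 q.2).PosSemidef

def IsCPTP (Φ : Matrix n n ℂ →ₗ[ℂ] Matrix m m ℂ) : Prop :=
  IsCompletelyPositive Φ ∧ ∀ X, (Φ X).trace = X.trace

/-- partial trace over the second factor -/
noncomputable def ptraceR {k r : Type*} [Fintype k] [Fintype r]
    (M : Matrix (k × r) (k × r) ℂ) : Matrix k k ℂ :=
  Matrix.of fun i j => ∑ a : r, M (i, a) (j, a)


section Aux
set_option linter.unusedSectionVars false

lemma trace_re_nonneg_of_posSemidef {P : Matrix n n ℂ} (hP : P.PosSemidef) :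
    0 ≤ P.trace.re := by
  rw [Matrix.trace]
  have h : ∀ i, 0 ≤ (P i i).re := by
    intro i
    have := hP.diag_nonneg (i := i)
    rw [Complex.le_def] at this
    simpa using this.1
  simpa using Finset.sum_nonneg fun i _ => h i

lemma trace_conj_sum (P Q : Matrix n n ℂ) : (Pᴴ * Q).trace
    = ∑ p : n × n, (starRingEnd ℂ) (P p.1 p.2) * Q p.1 p.2 := by
  rw [Matrix.trace, Fintype.sum_prod_type]
  simp only [Matrix.diag_apply, Matrix.mul_apply, Matrix.conjTranspose_apply, Complex.star_def]
  rw [Finset.sum_comm]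

lemma trace_cauchySchwarz (M N : Matrix n n ℂ) :
    ‖((Mᴴ * N).trace)‖ ≤
      Real.sqrt ((Mᴴ * M).trace.re) * Real.sqrt ((Nᴴ * N).trace.re) := by
  classical
  set x : EuclideanSpace ℂ (n × n) := WithLp.toLp 2 (fun p : n × n => M p.1 p.2) with hx
  set y : EuclideanSpace ℂ (n × n) := WithLp.toLp 2 (fun p : n × n => N p.1 p.2) with hy
  have hnorm : ∀ (P : Matrix n n ℂ) (z : EuclideanSpace ℂ (n × n)),
      (∀ p : n × n, z p = P p.1 p.2) → ‖z‖ = Real.sqrt ((Pᴴ * P).trace.re) := by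
    intro P z hz
    rw [EuclideanSpace.norm_eq]
    congr 1
    rw [trace_conj_sum, Complex.re_sum]
    refine Finset.sum_congr rfl fun p _ => ?_
    rw [hz]
    rw [← Complex.normSq_eq_conj_mul_self]
    simp [Complex.normSq_eq_norm_sq, sq]
  have hinner : (inner ℂ x y : ℂ) = (Mᴴ * N).trace := by
    rw [trace_conj_sum, PiLp.inner_apply]
    exact Finset.sum_congr rfl fun p _ => by simp [x, y, RCLike.inner_apply, mul_comm]
  calc ‖((Mᴴ * N).trace)‖ = ‖(inner ℂ x y : ℂ)‖ := by rw [hinner]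
    _ ≤ ‖x‖ * ‖y‖ := norm_inner_le_norm x y
    _ = _ := by rw [hnorm M x fun p => rfl, hnorm N y fun p => rfl]

noncomputable def hermFun {H : Matrix n n ℂ} (hH : H.IsHermitian) (f : ℝ → ℝ) : Matrix n n ℂ :=
  (hH.eigenvectorUnitary : Matrix n n ℂ) * diagonal (fun i => (f (hH.eigenvalues i) : ℂ)) *
    (hH.eigenvectorUnitary : Matrix n n ℂ)ᴴ

variable {H : Matrix n n ℂ} (hH : H.IsHermitian)

lemma hermFun_mul (f g : ℝ → ℝ) :
    hermFun hH f * hermFun hH g = hermFun hH fun x => f x * g x := by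
  have hU : (hH.eigenvectorUnitary : Matrix n n ℂ)ᴴ * (hH.eigenvectorUnitary : Matrix n n ℂ) = 1 := by
    simpa [Matrix.star_eq_conjTranspose] using (hH.eigenvectorUnitary).2.1
  simp only [hermFun, Matrix.mul_assoc]
  rw [← Matrix.mul_assoc ((hH.eigenvectorUnitary : Matrix n n ℂ)ᴴ), hU, Matrix.one_mul,
    ← Matrix.mul_assoc (diagonal _), Matrix.diagonal_mul_diagonal]
  push_cast
  rfl

lemma hermFun_one : hermFun hH (fun _ => 1) = 1 := by
  have hU : (hH.eigenvectorUnitary : Matrix n n ℂ) * (hH.eigenvectorUnitary : Matrix n n ℂ)ᴴ = 1 := by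
    simpa [Matrix.star_eq_conjTranspose] using (hH.eigenvectorUnitary).2.2
  simp [hermFun, hU]

lemma hermFun_id : hermFun hH id = H := by
  rw [hermFun]
  conv_rhs => rw [hH.spectral_theorem]
  rfl

lemma hermFun_sub (f g : ℝ → ℝ) :
    hermFun hH f - hermFun hH g = hermFun hH fun x => f x - g x := by
  simp only [hermFun, ← Matrix.sub_mul, ← Matrix.mul_sub, Matrix.diagonal_sub]
  push_cast
  rfl

lemma hermFun_isHermitian (f : ℝ → ℝ) : (hermFun hH f).IsHermitian := by
  apply Matrix.isHermitian_mul_mul_conjTranspose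
  rw [Matrix.IsHermitian, Matrix.diagonal_conjTranspose]
  funext i
  simp only [Pi.star_def, Complex.star_def, Complex.conj_ofReal]

lemma hermFun_posSemidef (f : ℝ → ℝ) (hf : ∀ x, 0 ≤ f x) : (hermFun hH f).PosSemidef := by
  apply Matrix.PosSemidef.mul_mul_conjTranspose_same
  rw [Matrix.posSemidef_diagonal_iff]
  intro i
  rw [Complex.zero_le_real]
  exact hf _

lemma hermFun_sqrt_sq_aux {X : Matrix n n ℂ} (hX : X.PosSemidef) :
    hermFun hX.1 Real.sqrt * hermFun hX.1 Real.sqrt = X := by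
  rw [hermFun_mul]
  conv_rhs => rw [← hermFun_id hX.1]
  simp only [hermFun]
  congr 3
  funext i
  simp [Real.mul_self_sqrt (hX.eigenvalues_nonneg i)]

lemma real_sign_mul_self (x : ℝ) : Real.sign x * x = |x| := by
  rcases lt_trichotomy x 0 with h|h|h
  · rw [Real.sign_of_neg h, abs_of_neg h]; ring
  · simp [h]
  · rw [Real.sign_of_pos h, abs_of_pos h]; ring

lemma real_sign_sq_le_one (x : ℝ) : Real.sign x * Real.sign x ≤ 1 := by
  rcases lt_trichotomy x 0 with h|h|h
  · rw [Real.sign_of_neg h]; norm_num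
  · simp [h]
  · rw [Real.sign_of_pos h]; norm_num

end Aux

/-- The trace norm of [A, ρ] is bounded by the square root of the SLD Fisher information. -/
theorem traceNorm_commutator_le_sqrt_fisher (ρ A L : Matrix n n ℂ) (hρ : IsDensity ρ)
    (hA : A.IsHermitian) (hL : IsSLD ρ A L) :
    traceNorm (A * ρ - ρ * A) ≤ Real.sqrt (fisherVal ρ L) := by
  obtain ⟨hρPSD, hρtr⟩ := hρ
  obtain ⟨hLH, hLeq⟩ := hL
  set R := hermFun hρPSD.1 Real.sqrt with hRdef
  have hRH : R.IsHermitian := hermFun_isHermitian hρPSD.1 _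
  have hRR : R * R = ρ := hermFun_sqrt_sq_aux hρPSD
  set c : ℂ := ((-(1/2) : ℝ) : ℂ) with hc
  set H : Matrix n n ℂ := c • (L * ρ + ρ * L) with hHdef
  have hHherm : H.IsHermitian := by
    rw [hHdef, Matrix.IsHermitian, Matrix.conjTranspose_smul, Matrix.conjTranspose_add,
      Matrix.conjTranspose_mul, Matrix.conjTranspose_mul, hLH.eq, hρPSD.1.eq,
      Complex.star_def, hc, Complex.conj_ofReal, add_comm (ρ * L)]
  have hXH : A * ρ - ρ * A = (-Complex.I) • H := by
    rw [hHdef, smul_smul, hLeq, smul_smul]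
    have : -Complex.I * c * ((-2 : ℂ) * Complex.I) = 1 := by
      rw [hc]
      push_cast
      ring_nf
      simp [Complex.I_sq]
    rw [this, one_smul]
  have hXX : (A * ρ - ρ * A)ᴴ * (A * ρ - ρ * A) = H * H := by
    rw [hXH, Matrix.conjTranspose_smul, hHherm.eq, Matrix.smul_mul, Matrix.mul_smul, smul_smul]
    have : star (-Complex.I) * -Complex.I = 1 := by simp
    rw [this, one_smul]
  -- spectral objects
  set S : Matrix n n ℂ := hermFun hHherm (fun x => |x|) with hSdef
  set B : Matrix n n ℂ := hermFun hHherm Real.sign with hBdef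
  have hBherm : B.IsHermitian := hermFun_isHermitian hHherm _
  have hS_PSD : S.PosSemidef := hermFun_posSemidef hHherm _ fun x => abs_nonneg x
  have hSsq : S * S = H * H := by
    rw [hSdef, hermFun_mul]
    conv_rhs => rw [← hermFun_id hHherm]
    rw [hermFun_mul]
    congr 1
    funext x
    simpa using abs_mul_abs_self x
  have hXX_PSD : ((A * ρ - ρ * A)ᴴ * (A * ρ - ρ * A)).PosSemidef :=
    Matrix.posSemidef_conjTranspose_mul_self _
  have hmsqrt : msqrt ((A * ρ - ρ * A)ᴴ * (A * ρ - ρ * A)) = S := by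
    rw [msqrt, dif_pos hXX_PSD]
    have hP := hermFun_posSemidef hXX_PSD.1 Real.sqrt Real.sqrt_nonneg
    change hermFun hXX_PSD.1 Real.sqrt = S
    open scoped MatrixOrder in
    exact (CFC.mul_self_eq_mul_self_iff _ _ hP.nonneg hS_PSD.nonneg).1
      (by rw [hermFun_sqrt_sq_aux hXX_PSD, hSsq, hXX])
  have hBH : B * H = S := by
    conv_lhs => rw [← hermFun_id hHherm]
    rw [hBdef, hermFun_mul, hSdef]
    have : (fun x => Real.sign x * id x) = fun x : ℝ => |x| :=
      funext fun x => by simpa using real_sign_mul_self x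
    rw [this]
  -- trace identities
  set t1 : ℂ := (B * (L * ρ)).trace with ht1def
  set t2 : ℂ := (B * (ρ * L)).trace with ht2def
  have htrace : traceNorm (A * ρ - ρ * A) = (-(1/2) : ℝ) * (t1.re + t2.re) := by
    rw [traceNorm, hmsqrt, ← hBH, hHdef, mul_smul_comm, Matrix.trace_smul, Matrix.mul_add,
      Matrix.trace_add, smul_eq_mul, hc, Complex.re_ofReal_mul, Complex.add_re]
  have ht1 : t1 = ((B * R)ᴴ * (L * R)).trace := by
    have e1 : (B * R)ᴴ * (L * R) = R * (B * (L * R)) := by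
      rw [Matrix.conjTranspose_mul, hBherm.eq, hRH.eq]
      simp only [Matrix.mul_assoc]
    calc t1 = (B * (L * (R * R))).trace := by rw [ht1def, hRR]
      _ = ((B * (L * R)) * R).trace := by simp only [Matrix.mul_assoc]
      _ = (R * (B * (L * R))).trace := Matrix.trace_mul_comm _ _
      _ = ((B * R)ᴴ * (L * R)).trace := by rw [e1]
  have ht2 : t2 = ((L * R)ᴴ * (B * R)).trace := by
    have e2 : (L * R)ᴴ * (B * R) = R * (L * (B * R)) := by
      rw [Matrix.conjTranspose_mul, hLH.eq, hRH.eq]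
      simp only [Matrix.mul_assoc]
    calc t2 = (B * ((R * R) * L)).trace := by rw [ht2def, hRR]
      _ = ((B * (R * R)) * L).trace := by simp only [Matrix.mul_assoc]
      _ = (L * (B * (R * R))).trace := Matrix.trace_mul_comm _ _
      _ = ((L * (B * R)) * R).trace := by simp only [Matrix.mul_assoc]
      _ = (R * (L * (B * R))).trace := Matrix.trace_mul_comm _ _
      _ = ((L * R)ᴴ * (B * R)).trace := by rw [e2]
  -- the two Gram quantities
  have hcB : ((B * R)ᴴ * (B * R)).trace.re ≤ 1 := by
    have h1B : (1 - B * B : Matrix n n ℂ).PosSemidef := by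
      rw [← hermFun_one hHherm, hBdef, hermFun_mul, hermFun_sub]
      exact hermFun_posSemidef hHherm _ fun x => sub_nonneg.mpr (real_sign_sq_le_one x)
    have hsplit : Rᴴ * (1 - B * B) * R = ρ - (B * R)ᴴ * (B * R) := by
      rw [hRH.eq, Matrix.conjTranspose_mul, hBherm.eq, hRH.eq, ← hRR]
      simp only [Matrix.mul_sub, Matrix.sub_mul, Matrix.mul_one, Matrix.mul_assoc]
    have hpos := trace_re_nonneg_of_posSemidef (h1B.conjTranspose_mul_mul_same R)
    rw [hsplit, Matrix.trace_sub, Complex.sub_re, hρtr] at hpos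
    simpa using hpos
  have hF : ((L * R)ᴴ * (L * R)).trace = (ρ * (L * L)).trace := by
    calc ((L * R)ᴴ * (L * R)).trace = (R * (L * (L * R))).trace := by
          rw [Matrix.conjTranspose_mul, hLH.eq, hRH.eq]; simp only [Matrix.mul_assoc]
      _ = ((L * (L * R)) * R).trace := Matrix.trace_mul_comm _ _
      _ = ((L * L) * (R * R)).trace := by simp only [Matrix.mul_assoc]
      _ = ((R * R) * (L * L)).trace := Matrix.trace_mul_comm _ _
      _ = (ρ * (L * L)).trace := by rw [hRR]
  -- Cauchy–Schwarz bounds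
  have hb1 : ‖t1‖ ≤
      Real.sqrt (((B * R)ᴴ * (B * R)).trace.re) * Real.sqrt (fisherVal ρ L) := by
    rw [ht1]
    have := trace_cauchySchwarz (B * R) (L * R)
    rwa [show ((L * R)ᴴ * (L * R)).trace.re = fisherVal ρ L by rw [hF]; rfl] at this
  have hb2 : ‖t2‖ ≤
      Real.sqrt (fisherVal ρ L) * Real.sqrt (((B * R)ᴴ * (B * R)).trace.re) := by
    rw [ht2]
    have := trace_cauchySchwarz (L * R) (B * R)
    rwa [show ((L * R)ᴴ * (L * R)).trace.re = fisherVal ρ L by rw [hF]; rfl] at this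
  have hsq1 : Real.sqrt (((B * R)ᴴ * (B * R)).trace.re) ≤ 1 := by
    rw [show (1:ℝ) = Real.sqrt 1 by rw [Real.sqrt_one]]
    exact Real.sqrt_le_sqrt hcB
  have hbound : ∀ b, ‖t1‖ ≤ b * Real.sqrt (fisherVal ρ L) → b ≤ 1 → True := fun _ _ _ => trivial
  rw [htrace]
  have hre : (-(1/2) : ℝ) * (t1.re + t2.re) ≤ (1/2) * (‖t1‖ + ‖t2‖) := by
    have h1 : -t1.re ≤ ‖t1‖ := by
      have := Complex.abs_re_le_norm t1; rw [abs_le] at this; linarith [this.1]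
    have h2 : -t2.re ≤ ‖t2‖ := by
      have := Complex.abs_re_le_norm t2; rw [abs_le] at this; linarith [this.1]
    linarith
  refine hre.trans ?_
  have : ‖t1‖ + ‖t2‖ ≤ 2 * Real.sqrt (fisherVal ρ L) := by
    have e1 : Real.sqrt (((B * R)ᴴ * (B * R)).trace.re) * Real.sqrt (fisherVal ρ L)
        ≤ 1 * Real.sqrt (fisherVal ρ L) :=
      mul_le_mul_of_nonneg_right hsq1 (Real.sqrt_nonneg _)
    have e2 : Real.sqrt (fisherVal ρ L) * Real.sqrt (((B * R)ᴴ * (B * R)).trace.re)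
        ≤ Real.sqrt (fisherVal ρ L) * 1 :=
      mul_le_mul_of_nonneg_left hsq1 (Real.sqrt_nonneg _)
    nlinarith [hb1, hb2]
  linarith
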